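/- arXiv:2202.02839 — 4 statements merged into one kernel-verified Lean document; each statement's English description precedes it below -/
import Mathlib

section
/- Let H be a hypergraph of rank k and let H' be obtained from H by one step of codegree reduction where a set S of size s replaces all edges e ⊇ S of size ℓ > s whenever deg_ℓ(S, H) ≥ f(s, ℓ), and suppose f(s+1, ℓ) < f(s, ℓ). If H is triangle-free, then H' is triangle-free. More precisely: if H' contains a triangle using a newly created edge S (with S of size s, and at least f(s, ℓ) edges of H of size ℓ containing S, while the maximum (s+1, ℓ)-codegree of H is at most f(s+1, ℓ)), then H already contained a triangle. -/
open Finset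

/-- A triangle in a hypergraph. -/
def IsTriangle {V : Type*} [DecidableEq V] (H : Finset (Finset V)) : Prop :=
  ∃ e f g : Finset V, ∃ u v w : V,
    e ∈ H ∧ f ∈ H ∧ g ∈ H ∧ e ≠ f ∧ e ≠ g ∧ f ≠ g ∧
    u ≠ v ∧ v ≠ w ∧ u ≠ w ∧
    u ∈ e ∧ v ∈ e ∧ v ∈ f ∧ w ∈ f ∧ w ∈ g ∧ u ∈ g ∧
    ({u, v, w} ∩ e ∩ f ∩ g : Finset V) = ∅

/-- One step of codegree reduction preserves triangle-freeness.  Precisely: suppose a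
newly created edge `S` of size `s` satisfies `deg_ℓ(S, H) ≥ f s ℓ`, while the maximum
`(s+1, ℓ)`-codegree of `H` is at most `f (s+1) ℓ < f s ℓ`.  If `S` together with two
edges `fE, gE` of `H` forms a triangle, then `H` already contained a triangle. -/
theorem triangle_of_reduced_triangle {V : Type*} [DecidableEq V]
    (H : Finset (Finset V)) (S : Finset V) (s ℓ : ℕ) (f : ℕ → ℕ → ℕ)
    (hScard : S.card = s)
    (hdeg : f s ℓ ≤ (H.filter (fun e => S ⊆ e ∧ e.card = ℓ)).card)
    (hcodeg : ∀ S' : Finset V, S'.card = s + 1 →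
      (H.filter (fun e => S' ⊆ e ∧ e.card = ℓ)).card ≤ f (s + 1) ℓ)
    (hf : f (s + 1) ℓ < f s ℓ)
    (fE gE : Finset V) (u v w : V)
    (hfE : fE ∈ H) (hgE : gE ∈ H)
    (hSf : S ≠ fE) (hSg : S ≠ gE) (hfg : fE ≠ gE)
    (huv : u ≠ v) (hvw : v ≠ w) (huw : u ≠ w)
    (huS : u ∈ S) (hvS : v ∈ S) (hvf : v ∈ fE) (hwf : w ∈ fE)
    (hwg : w ∈ gE) (hug : u ∈ gE)
    (hempty : ({u, v, w} ∩ S ∩ fE ∩ gE : Finset V) = ∅) :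
    IsTriangle H := by
  have hwS : w ∉ S := by
    intro hwS
    have : w ∈ ({u, v, w} ∩ S ∩ fE ∩ gE : Finset V) := by
      simp [hwS, hwf, hwg]
    rw [hempty] at this; simp at this
  have huf : u ∉ fE := by
    intro huf
    have : u ∈ ({u, v, w} ∩ S ∩ fE ∩ gE : Finset V) := by
      simp [huS, huf, hug]
    rw [hempty] at this; simp at this
  have hvg : v ∉ gE := by
    intro hvg
    have : v ∈ ({u, v, w} ∩ S ∩ fE ∩ gE : Finset V) := by
      simp [hvS, hvf, hvg]
    rw [hempty] at this; simp at this
  have hsub : H.filter (fun e => insert w S ⊆ e ∧ e.card = ℓ) ⊆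
      H.filter (fun e => S ⊆ e ∧ e.card = ℓ) := by
    intro e he
    simp only [mem_filter, insert_subset_iff] at he ⊢
    exact ⟨he.1, he.2.1.2, he.2.2⟩
  have hcard : (insert w S).card = s + 1 := by
    rw [card_insert_of_notMem hwS, hScard]
  have hlt : (H.filter (fun e => insert w S ⊆ e ∧ e.card = ℓ)).card <
      (H.filter (fun e => S ⊆ e ∧ e.card = ℓ)).card :=
    lt_of_le_of_lt (hcodeg _ hcard) (lt_of_lt_of_le hf hdeg)
  obtain ⟨e, he, hne⟩ := exists_of_ssubset (ssubset_of_subset_of_ne hsub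
    (fun h => lt_irrefl _ (h ▸ hlt)))
  simp only [mem_filter] at he hne
  have hSe : S ⊆ e := he.2.1
  have hwe : w ∉ e := by
    intro hwe
    exact hne ⟨he.1, insert_subset hwe hSe, he.2.2⟩
  refine ⟨e, fE, gE, u, v, w, he.1, hfE, hgE, ?_, ?_, hfg, huv, hvw, huw,
    hSe huS, hSe hvS, hvf, hwf, hwg, hug, ?_⟩
  · intro h; exact huf (h ▸ hSe huS)
  · intro h; exact hvg (h ▸ hSe hvS)
  · ext x
    simp only [mem_inter, mem_insert, mem_singleton, notMem_empty, iff_false]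
    rintro ⟨⟨⟨rfl | rfl | rfl, hx⟩, hxf⟩, hxg⟩
    · exact huf hxf
    · exact hvg hxg
    · exact hwe hx
end

section
/- Let H be a hypergraph in which no two distinct edges e₁, e₂ satisfy e₁ ⊊ e₂, and suppose H is triangle-free. Fix an edge e₀ and two distinct vertices v, v' ∈ e₀. If e, e' are edges with v ∈ e, v' ∈ e', v ∉ e', and e' = ((e − v) ∩ (e' − v')) ∪ {v'} (i.e., |e'| = |(e−v) ∩ (e'−v')| + 1), and e, e', e₀ are pairwise distinct, and (e−v) ∩ (e'−v') is not contained in e₀, then H contains a triangle — contradiction. Hence for any antichain triangle-free hypergraph, if (e,v) and (e',v') are distinct pointed edges with (e−v) ∩ (e'−v') ≠ ∅ and v, v' ∈ e₀ for some edge e₀, then |e'| > |(e−v) ∩ (e'−v')| + 1. -/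
open Finset

/-- In a triangle-free hypergraph in which no edge strictly contains another, if
`(e, v)` and `(e', v')` are distinct pointed edges with `(e − v) ∩ (e' − v') ≠ ∅` and
`v, v'` both lie in some edge `e₀`, then `|e'| > |(e − v) ∩ (e' − v')| + 1`. -/
theorem claim_dep {V : Type*} [DecidableEq V] (H : Finset (Finset V))
    (hanti : ∀ e₁ ∈ H, ∀ e₂ ∈ H, e₁ ⊆ e₂ → e₁ = e₂)
    (htf : ¬ IsTriangle H)
    (e₀ e e' : Finset V) (v v' : V)
    (he₀ : e₀ ∈ H) (he : e ∈ H) (he' : e' ∈ H)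
    (hv : v ∈ e) (hv' : v' ∈ e')
    (hv0 : v ∈ e₀) (hv'0 : v' ∈ e₀)
    (hne : ¬ (e = e' ∧ v = v'))
    (hint : ((e.erase v) ∩ (e'.erase v')).Nonempty) :
    ((e.erase v) ∩ (e'.erase v')).card + 1 < e'.card := by
  by_contra hlt
  push_neg at hlt
  set S := (e.erase v) ∩ (e'.erase v') with hS
  have hSe : S ⊆ e := inter_subset_left.trans (erase_subset _ _)
  have hSe' : S ⊆ e' := inter_subset_right.trans (erase_subset _ _)
  have hv'S : v' ∉ S := fun h => (mem_erase.1 (mem_inter.1 h).2).1 rfl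
  have hsub : insert v' S ⊆ e' := insert_subset hv' hSe'
  have hcard : e'.card ≤ (insert v' S).card := by
    rw [card_insert_of_notMem hv'S]; omega
  have heq : e' = insert v' S := (eq_of_subset_of_card_le hsub hcard).symm
  by_cases hvv : v = v'
  · have hee' : e ≠ e' := fun h => hne ⟨h, hvv⟩
    have hsub2 : e' ⊆ e := by
      rw [heq]; exact insert_subset (hvv ▸ hv) hSe
    exact hee' (hanti e' he' e he hsub2).symm
  · have hvne' : v ∉ e' := by
      intro h
      rw [heq, mem_insert] at h
      rcases h with h | h
      · exact hvv h
      · exact (mem_erase.1 (mem_inter.1 h).1).1 rfl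
    have hv'ne : v' ∉ e := by
      intro h
      have hsub2 : e' ⊆ e := by rw [heq]; exact insert_subset h hSe
      have hq := hanti e' he' e he hsub2
      exact hvne' (hq ▸ hv)
    have hee0 : e ≠ e₀ := fun h => hv'ne (h ▸ hv'0)
    have he'e0 : e' ≠ e₀ := fun h => hvne' (h ▸ hv0)
    obtain ⟨w, hwS, hwe0⟩ : ∃ w ∈ S, w ∉ e₀ := by
      by_contra hall
      push_neg at hall
      have hsub2 : e' ⊆ e₀ := by
        rw [heq]; exact insert_subset hv'0 hall
      exact hvne' ((hanti e' he' e₀ he₀ hsub2) ▸ hv0)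
    have hwv : w ≠ v := (mem_erase.1 (mem_inter.1 hwS).1).1
    have hwv' : w ≠ v' := (mem_erase.1 (mem_inter.1 hwS).2).1
    have hee' : e ≠ e' := fun h => hvne' (h ▸ hv)
    refine htf ⟨e₀, e', e, v, v', w, he₀, he', he, he'e0.symm, hee0.symm, hee'.symm,
      hvv, hwv'.symm, hwv.symm, hv0, hv'0, hv', hSe' hwS, hSe hwS, hv, ?_⟩
    apply eq_empty_of_forall_notMem
    intro x hx
    simp only [mem_inter, mem_insert, mem_singleton] at hx
    obtain ⟨⟨⟨hx1, hx2⟩, hx3⟩, hx4⟩ := hx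
    rcases hx1 with rfl | rfl | rfl
    · exact hvne' hx3
    · exact hv'ne hx4
    · exact hwe0 hx2
end

section
/- Let {A_i}_{i∈I} be events in a finite product probability space, each of the form A_i = {A_i ⊆ R} for a random subset R with independent element inclusions, with P(A_i) ≤ ε < 1 for all i. Define Δ* = Σ_{i∼j} P(A_i ∧ A_j) over ordered pairs of dependent events, and M = Π_i P(¬A_i). Then M ≤ P(∧_i ¬A_i) ≤ M·exp(Δ*/(2(1−ε))). -/
open Finset

open scoped Classical

section JansonAux
variable {Ω : Type*} [Fintype Ω] [DecidableEq Ω]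

noncomputable def JW (p : Ω → ℝ) (B : Finset Ω) : ℝ :=
  (∏ v ∈ B, p v) * ∏ v ∈ Bᶜ, (1 - p v)

lemma JW_nonneg {p : Ω → ℝ} (hp0 : ∀ v, 0 ≤ p v) (hp1 : ∀ v, p v ≤ 1) (B : Finset Ω) :
    0 ≤ JW p B :=
  mul_nonneg (prod_nonneg fun v _ => hp0 v) (prod_nonneg fun v _ => by linarith [hp1 v])

lemma JW_sum_one {p : Ω → ℝ} : ∑ B : Finset Ω, JW p B = 1 := by
  have h := Finset.prod_add p (fun v => 1 - p v) (univ : Finset Ω)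
  simp only [add_sub_cancel, prod_const_one] at h
  rw [← Finset.powerset_univ, h]
  exact Finset.sum_congr rfl fun t _ => by rw [JW, compl_eq_univ_sdiff]

lemma JW_supermodular {p : Ω → ℝ} (a b : Finset Ω) :
    JW p a * JW p b = JW p (a ∩ b) * JW p (a ∪ b) := by
  have h1 : (∏ v ∈ a ∩ b, p v) * ∏ v ∈ a ∪ b, p v = (∏ v ∈ a, p v) * ∏ v ∈ b, p v := by
    rw [mul_comm]; exact Finset.prod_union_inter
  have h2 : (∏ v ∈ (a ∩ b)ᶜ, (1 - p v)) * ∏ v ∈ (a ∪ b)ᶜ, (1 - p v)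
      = (∏ v ∈ aᶜ, (1 - p v)) * ∏ v ∈ bᶜ, (1 - p v) := by
    rw [compl_inter, compl_union]; exact Finset.prod_union_inter
  unfold JW
  rw [mul_mul_mul_comm, ← h1, ← h2, mul_mul_mul_comm]

private lemma union_sdiff_self_of_compl {S C : Finset Ω} (hC : C ⊆ Sᶜ) : (S ∪ C) \ S = C := by
  ext v; simp only [mem_sdiff, mem_union]
  constructor
  · rintro ⟨h1 | h1, h2⟩
    · exact absurd h1 h2
    · exact h1
  · intro hv; exact ⟨Or.inr hv, fun hvS => (Finset.mem_compl.mp (hC hv)) hvS⟩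

/-- Reindexing: sum over supersets of `S` satisfying `φ` (depending only on the outside). -/
lemma JW_cond_sum (S : Finset Ω) (φ : Finset Ω → Prop) [DecidablePred φ]
    [DecidablePred (fun B => S ⊆ B ∧ φ B)] (hφ : ∀ B, φ B ↔ φ (B \ S)) (F : Finset Ω → ℝ) :
    ∑ B ∈ univ.filter (fun B => S ⊆ B ∧ φ B), F B
      = ∑ C ∈ Sᶜ.powerset.filter φ, F (S ∪ C) := by
  refine Finset.sum_nbij' (fun B => B \ S) (fun C => S ∪ C) ?_ ?_ ?_ ?_ ?_
  · intro B hB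
    simp only [mem_filter, mem_univ, true_and] at hB
    simp only [mem_filter, mem_powerset]
    exact ⟨fun v hv => Finset.mem_compl.mpr (Finset.mem_sdiff.mp hv).2, (hφ B).mp hB.2⟩
  · intro C hC
    simp only [mem_filter, mem_powerset] at hC
    simp only [mem_filter, mem_univ, true_and]
    exact ⟨subset_union_left, by rw [hφ, union_sdiff_self_of_compl hC.1]; exact hC.2⟩
  · intro B hB
    simp only [mem_filter, mem_univ, true_and] at hB
    exact Finset.union_sdiff_of_subset hB.1
  · intro C hC
    simp only [mem_filter, mem_powerset] at hC
    exact union_sdiff_self_of_compl hC.1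
  · intro B hB
    simp only [mem_filter, mem_univ, true_and] at hB
    rw [Finset.union_sdiff_of_subset hB.1]



variable {Ω : Type*} [Fintype Ω] [DecidableEq Ω]

private lemma compl_union_split {S T C : Finset Ω} (hT : T ⊆ S) (hC : C ⊆ Sᶜ) :
    (T ∪ C)ᶜ = (S \ T) ∪ (Sᶜ \ C) := by
  ext v
  simp only [mem_compl, mem_union, mem_sdiff, not_or]
  by_cases hv : v ∈ S
  · have hvC : v ∉ C := fun h => (Finset.mem_compl.mp (hC h)) hv
    have hvc : v ∉ Sᶜ := by simp [hv]
    tauto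
  · have hvT : v ∉ T := fun h => hv (hT h)
    have hvc : v ∈ Sᶜ := by simp [hv]
    tauto


lemma JW_union_eq {p : Ω → ℝ} {S T C : Finset Ω} (hT : T ⊆ S) (hC : C ⊆ Sᶜ) :
    JW p (T ∪ C) = ((∏ v ∈ T, p v) * ∏ v ∈ S \ T, (1 - p v)) *
      ((∏ v ∈ C, p v) * ∏ v ∈ Sᶜ \ C, (1 - p v)) := by
  have hdTC : Disjoint T C := by
    refine Finset.disjoint_left.mpr fun v hv hv' => ?_
    exact (Finset.mem_compl.mp (hC hv')) (hT hv)
  have hd2 : Disjoint (S \ T) (Sᶜ \ C) := by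
    refine Finset.disjoint_left.mpr fun v hv hv' => ?_
    exact (Finset.mem_compl.mp (Finset.mem_sdiff.mp hv').1) (Finset.mem_sdiff.mp hv).1
  rw [JW, Finset.prod_union hdTC, compl_union_split hT hC, Finset.prod_union hd2]
  ring

lemma JW_fiber_sum {p : Ω → ℝ} {S C : Finset Ω} (hC : C ⊆ Sᶜ) :
    ∑ B ∈ univ.filter (fun B => B \ S = C), JW p B
      = (∏ v ∈ C, p v) * ∏ v ∈ Sᶜ \ C, (1 - p v) := by
  have key : ∑ B ∈ univ.filter (fun B => B \ S = C), JW p B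
      = ∑ T ∈ S.powerset, JW p (T ∪ C) := by
    refine Finset.sum_nbij' (fun B => B ∩ S) (fun T => T ∪ C) ?_ ?_ ?_ ?_ ?_
    · intro B _; simp [Finset.inter_subset_right]
    · intro T hT
      simp only [mem_powerset] at hT
      simp only [mem_filter, mem_univ, true_and]
      ext v; simp only [mem_sdiff, mem_union]
      constructor
      · rintro ⟨h1 | h1, h2⟩
        · exact absurd (hT h1) h2
        · exact h1
      · intro hv; exact ⟨Or.inr hv, fun h => (Finset.mem_compl.mp (hC hv)) h⟩
    · intro B hB
      simp only [mem_filter, mem_univ, true_and] at hB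
      rw [← hB]
      ext v; simp only [mem_union, mem_inter, mem_sdiff]
      tauto
    · intro T hT
      simp only [mem_powerset] at hT
      ext v; simp only [mem_inter, mem_union]
      constructor
      · rintro ⟨h1 | h1, h2⟩
        · exact h1
        · exact absurd h2 (Finset.mem_compl.mp (hC h1))
      · intro hv; exact ⟨Or.inl hv, hT hv⟩
    · intro B hB
      simp only [mem_filter, mem_univ, true_and] at hB
      congr 1
      rw [← hB]
      ext v; simp only [mem_union, mem_inter, mem_sdiff]
      tauto
  rw [key]
  have : ∑ T ∈ S.powerset, JW p (T ∪ C)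
      = ∑ T ∈ S.powerset, ((∏ v ∈ T, p v) * ∏ v ∈ S \ T, (1 - p v)) *
          ((∏ v ∈ C, p v) * ∏ v ∈ Sᶜ \ C, (1 - p v)) :=
    Finset.sum_congr rfl fun T hT => JW_union_eq (Finset.mem_powerset.mp hT) hC
  rw [this, ← Finset.sum_mul]
  have hone : ∑ T ∈ S.powerset, (∏ v ∈ T, p v) * ∏ v ∈ S \ T, (1 - p v) = 1 := by
    have h := Finset.prod_add p (fun v => 1 - p v) S
    simp only [add_sub_cancel, prod_const_one] at h
    exact h.symm
  rw [hone, one_mul]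

lemma JW_slice {p : Ω → ℝ} (S : Finset Ω) (φ : Finset Ω → Prop) [DecidablePred φ]
    (hφ : ∀ B, φ B ↔ φ (B \ S)) :
    ∑ B ∈ univ.filter φ, JW p B
      = ∑ C ∈ Sᶜ.powerset.filter φ, (∏ v ∈ C, p v) * ∏ v ∈ Sᶜ \ C, (1 - p v) := by
  have := Finset.sum_fiberwise_of_maps_to (g := fun B : Finset Ω => B \ S)
    (s := univ.filter φ) (t := Sᶜ.powerset.filter φ) ?_ (JW p)
  · rw [← this]
    refine Finset.sum_congr rfl fun C hC => ?_
    simp only [mem_filter, mem_powerset] at hC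
    rw [← JW_fiber_sum (p := p) hC.1]
    refine Finset.sum_congr ?_ fun _ _ => rfl
    ext B
    simp only [mem_filter, mem_univ, true_and]
    constructor
    · rintro ⟨_, h⟩; exact h
    · intro h; exact ⟨by rw [hφ, h]; exact hC.2, h⟩
  · intro B hB
    simp only [mem_filter, mem_univ, true_and] at hB ⊢
    exact ⟨Finset.mem_powerset.mpr (fun v hv => Finset.mem_compl.mpr (Finset.mem_sdiff.mp hv).2),
      (hφ B).mp hB⟩

lemma JW_indep {p : Ω → ℝ} (S : Finset Ω) (φ : Finset Ω → Prop) [DecidablePred φ]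
    [DecidablePred (fun B => S ⊆ B ∧ φ B)] (hφ : ∀ B, φ B ↔ φ (B \ S)) :
    ∑ B ∈ univ.filter (fun B => S ⊆ B ∧ φ B), JW p B
      = (∏ v ∈ S, p v) * ∑ B ∈ univ.filter φ, JW p B := by
  rw [JW_cond_sum S φ hφ (JW p), JW_slice S φ hφ, Finset.mul_sum]
  refine Finset.sum_congr rfl fun C hC => ?_
  simp only [mem_filter, mem_powerset] at hC
  have h := JW_union_eq (p := p) (S := S) (Finset.Subset.refl S) hC.1
  simp only [sdiff_self, Finset.bot_eq_empty, Finset.prod_empty, mul_one] at h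
  rw [h]

lemma JW_upset {p : Ω → ℝ} (S : Finset Ω) :
    ∑ B ∈ univ.filter (fun B => S ⊆ B), JW p B = ∏ v ∈ S, p v := by
  have h := JW_indep (p := p) S (fun _ => True) (by simp)
  simp only [and_true, Finset.filter_true] at h
  rw [h, JW_sum_one, mul_one]


noncomputable def Jind (φ : Finset Ω → Prop) (B : Finset Ω) : ℝ := if φ B then 1 else 0

lemma Jind_nonneg (φ : Finset Ω → Prop) (B : Finset Ω) : 0 ≤ Jind φ B := by
  unfold Jind; split_ifs <;> norm_num

lemma Jind_le_one (φ : Finset Ω → Prop) (B : Finset Ω) : Jind φ B ≤ 1 := by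
  unfold Jind; split_ifs <;> norm_num

lemma Jind_mul (φ ψ : Finset Ω → Prop) (B : Finset Ω) :
    Jind φ B * Jind ψ B = Jind (fun B => φ B ∧ ψ B) B := by
  unfold Jind; split_ifs with h1 h2 h3 <;> simp_all

lemma sum_filter_JW {p : Ω → ℝ} (φ : Finset Ω → Prop) [DecidablePred φ] :
    ∑ B ∈ univ.filter φ, JW p B = ∑ B : Finset Ω, JW p B * Jind φ B := by
  rw [Finset.sum_filter]
  exact Finset.sum_congr rfl fun B _ => by unfold Jind; split_ifs <;> simp

lemma JW_fkg_anti {p : Ω → ℝ} (hp0 : ∀ v, 0 ≤ p v) (hp1 : ∀ v, p v ≤ 1)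
    (f g : Finset Ω → ℝ) (hf0 : ∀ B, 0 ≤ f B) (hg0 : ∀ B, 0 ≤ g B)
    (hf : ∀ ⦃B B' : Finset Ω⦄, B ⊆ B' → f B' ≤ f B)
    (hg : ∀ ⦃B B' : Finset Ω⦄, B ⊆ B' → g B' ≤ g B) :
    (∑ B : Finset Ω, JW p B * f B) * (∑ B : Finset Ω, JW p B * g B)
      ≤ ∑ B : Finset Ω, JW p B * (f B * g B) := by
  have key := fkg (α := (Finset Ω)ᵒᵈ)
    (fun a => f (OrderDual.ofDual a)) (fun a => g (OrderDual.ofDual a))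
    (fun a => JW p (OrderDual.ofDual a))
    (fun a => JW_nonneg hp0 hp1 _) (fun a => hf0 _) (fun a => hg0 _)
    (fun a b hab => hf hab) (fun a b hab => hg hab)
    (fun a b => le_of_eq (by
      have := JW_supermodular (p := p) (OrderDual.ofDual a) (OrderDual.ofDual b)
      simpa [mul_comm] using this))
  have e1 : ∀ F : Finset Ω → ℝ, ∑ a : (Finset Ω)ᵒᵈ, F (OrderDual.ofDual a) = ∑ B : Finset Ω, F B :=
    fun F => Fintype.sum_equiv (OrderDual.ofDual) _ _ (fun _ => rfl)
  rw [e1 (fun B => JW p B * f B), e1 (fun B => JW p B * g B), e1 (fun B => JW p B),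
    e1 (fun B => JW p B * (f B * g B)), JW_sum_one, one_mul] at key
  exact key

lemma harris_down_down {p : Ω → ℝ} (hp0 : ∀ v, 0 ≤ p v) (hp1 : ∀ v, p v ≤ 1)
    (φ ψ : Finset Ω → Prop) [DecidablePred φ] [DecidablePred ψ]
    [DecidablePred (fun B => φ B ∧ ψ B)]
    (hφ : ∀ ⦃B B' : Finset Ω⦄, B ⊆ B' → φ B' → φ B)
    (hψ : ∀ ⦃B B' : Finset Ω⦄, B ⊆ B' → ψ B' → ψ B) :
    (∑ B ∈ univ.filter φ, JW p B) * (∑ B ∈ univ.filter ψ, JW p B)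
      ≤ ∑ B ∈ univ.filter (fun B => φ B ∧ ψ B), JW p B := by
  rw [sum_filter_JW, sum_filter_JW, sum_filter_JW]
  have key := JW_fkg_anti hp0 hp1 (Jind φ) (Jind ψ) (Jind_nonneg φ) (Jind_nonneg ψ)
    (fun B B' h => by unfold Jind; split_ifs with h1 h2 <;>
      first | exact absurd (hφ h h1) h2 | norm_num)
    (fun B B' h => by unfold Jind; split_ifs with h1 h2 <;>
      first | exact absurd (hψ h h1) h2 | norm_num)
  calc (∑ B : Finset Ω, JW p B * Jind φ B) * (∑ B : Finset Ω, JW p B * Jind ψ B)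
      ≤ ∑ B : Finset Ω, JW p B * (Jind φ B * Jind ψ B) := key
    _ = ∑ B : Finset Ω, JW p B * Jind (fun B => φ B ∧ ψ B) B := by
        exact Finset.sum_congr rfl fun B _ => by rw [Jind_mul]

lemma harris_up_down {p : Ω → ℝ} (hp0 : ∀ v, 0 ≤ p v) (hp1 : ∀ v, p v ≤ 1)
    (φ ψ : Finset Ω → Prop) [DecidablePred φ] [DecidablePred ψ]
    [DecidablePred (fun B => φ B ∧ ψ B)]
    (hφ : ∀ ⦃B B' : Finset Ω⦄, B ⊆ B' → φ B → φ B')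
    (hψ : ∀ ⦃B B' : Finset Ω⦄, B ⊆ B' → ψ B' → ψ B) :
    ∑ B ∈ univ.filter (fun B => φ B ∧ ψ B), JW p B
      ≤ (∑ B ∈ univ.filter φ, JW p B) * (∑ B ∈ univ.filter ψ, JW p B) := by
  rw [sum_filter_JW, sum_filter_JW, sum_filter_JW]
  have key := JW_fkg_anti hp0 hp1 (fun B => 1 - Jind φ B) (Jind ψ)
    (fun B => by linarith [Jind_le_one φ B]) (Jind_nonneg ψ)
    (fun B B' h => by
      simp only [sub_le_sub_iff_left]
      unfold Jind; split_ifs with h1 h2 <;>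
        first | exact absurd (hφ h h1) h2 | norm_num)
    (fun B B' h => by unfold Jind; split_ifs with h1 h2 <;>
      first | exact absurd (hψ h h1) h2 | norm_num)
  have e1 : ∑ B : Finset Ω, JW p B * (1 - Jind φ B)
      = 1 - ∑ B : Finset Ω, JW p B * Jind φ B := by
    have e : ∑ B : Finset Ω, JW p B * (1 - Jind φ B)
        = (∑ B : Finset Ω, JW p B) - ∑ B : Finset Ω, JW p B * Jind φ B := by
      rw [← Finset.sum_sub_distrib]
      exact Finset.sum_congr rfl fun B _ => by ring
    rw [e, JW_sum_one]
  have e2 : ∑ B : Finset Ω, JW p B * ((1 - Jind φ B) * Jind ψ B)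
      = (∑ B : Finset Ω, JW p B * Jind ψ B)
        - ∑ B : Finset Ω, JW p B * (Jind φ B * Jind ψ B) := by
    rw [← Finset.sum_sub_distrib]
    exact Finset.sum_congr rfl fun B _ => by ring
  rw [e1, e2] at key
  have e3 : ∑ B : Finset Ω, JW p B * (Jind φ B * Jind ψ B)
      = ∑ B : Finset Ω, JW p B * Jind (fun B => φ B ∧ ψ B) B :=
    Finset.sum_congr rfl fun B _ => by rw [Jind_mul]
  rw [e3] at key
  nlinarith [key]

end JansonAux

section JansonMain
variable {Ω ι : Type*} [Fintype Ω] [DecidableEq Ω]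

lemma sum_filter_iff {F : Finset Ω → ℝ} (φ ψ : Finset Ω → Prop) [DecidablePred φ] [DecidablePred ψ]
    (h : ∀ B, φ B ↔ ψ B) :
    ∑ B ∈ univ.filter φ, F B = ∑ B ∈ univ.filter ψ, F B :=
  Finset.sum_congr (by ext B; simp [Finset.mem_filter, h B]) (fun _ _ => rfl)

lemma janson_step_lower (p : Ω → ℝ) (hp0 : ∀ v, 0 ≤ p v) (hp1 : ∀ v, p v ≤ 1)
    (A : ι → Finset Ω) (i : ι) (s : Finset ι) :
    (1 - ∏ v ∈ A i, p v) * ∑ B ∈ univ.filter (fun B => ∀ j ∈ s, ¬ A j ⊆ B), JW p B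
      ≤ ∑ B ∈ univ.filter (fun B => ∀ j ∈ insert i s, ¬ A j ⊆ B), JW p B := by
  classical
  have hnot : ∑ B ∈ univ.filter (fun B => ¬ A i ⊆ B), JW p B = 1 - ∏ v ∈ A i, p v := by
    have hsplit := Finset.sum_filter_add_sum_filter_not (univ : Finset (Finset Ω))
      (fun B => A i ⊆ B) (JW p)
    have h1 : ∑ B ∈ univ.filter (fun B => A i ⊆ B), JW p B = ∏ v ∈ A i, p v := JW_upset _
    have h2 : ∑ B : Finset Ω, JW p B = 1 := JW_sum_one
    linarith [hsplit, h1, h2]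
  have hh := harris_down_down hp0 hp1 (fun B => ¬ A i ⊆ B) (fun B => ∀ j ∈ s, ¬ A j ⊆ B)
    (fun B B' hBB h hAB => h (hAB.trans hBB))
    (fun B B' hBB h j hj hAB => h j hj (hAB.trans hBB))
  rw [hnot] at hh
  calc (1 - ∏ v ∈ A i, p v) * ∑ B ∈ univ.filter (fun B => ∀ j ∈ s, ¬ A j ⊆ B), JW p B
      ≤ ∑ B ∈ univ.filter (fun B => ¬ A i ⊆ B ∧ ∀ j ∈ s, ¬ A j ⊆ B), JW p B := hh
    _ = _ := sum_filter_iff _ _ (fun B => by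
        rw [Finset.forall_mem_insert])

lemma janson_step_upper (p : Ω → ℝ) (hp0 : ∀ v, 0 ≤ p v) (hp1 : ∀ v, p v ≤ 1)
    (A : ι → Finset Ω) (i : ι) (s : Finset ι) (hi : i ∉ s) :
    ∑ B ∈ univ.filter (fun B => ∀ j ∈ insert i s, ¬ A j ⊆ B), JW p B
      ≤ (1 - (∏ v ∈ A i, p v)
          + ∑ j ∈ s, (if i ≠ j ∧ (A i ∩ A j).Nonempty then ∏ v ∈ A i ∪ A j, p v else 0))
        * ∑ B ∈ univ.filter (fun B => ∀ j ∈ s, ¬ A j ⊆ B), JW p B := by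
  classical
  set q : ℝ := ∏ v ∈ A i, p v with hq
  set s1 := s.filter (fun j => (A i ∩ A j).Nonempty) with hs1
  set φE : Finset Ω → Prop := fun B => ∀ j ∈ s.filter (fun j => ¬ (A i ∩ A j).Nonempty),
    ¬ A j ⊆ B with hφE
  set φS : Finset Ω → Prop := fun B => ∀ j ∈ s, ¬ A j ⊆ B with hφS
  set PE := ∑ B ∈ univ.filter φE, JW p B with hPE
  set Ps := ∑ B ∈ univ.filter φS, JW p B with hPs
  set Sd := ∑ j ∈ s1, ∏ v ∈ A i ∪ A j, p v with hSd
  set T := ∑ B ∈ univ.filter (fun B => A i ⊆ B ∧ φS B), JW p B with hT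
  -- the i ≠ j condition is automatic
  have hdsum : ∑ j ∈ s, (if i ≠ j ∧ (A i ∩ A j).Nonempty then ∏ v ∈ A i ∪ A j, p v else 0)
      = Sd := by
    rw [hSd, hs1, Finset.sum_filter]
    refine Finset.sum_congr rfl fun j hj => ?_
    have hij : i ≠ j := fun h => hi (h ▸ hj)
    simp [hij]
  -- decomposition of φS through φE and the dependent part
  have hφSiff : ∀ B, φS B ↔ ((∀ j ∈ s1, ¬ A j ⊆ B) ∧ φE B) := by
    intro B
    constructor
    · intro h
      exact ⟨fun j hj => h j (Finset.mem_of_mem_filter j hj),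
        fun j hj => h j (Finset.mem_of_mem_filter j hj)⟩
    · rintro ⟨h1, h2⟩ j hj
      by_cases hne : (A i ∩ A j).Nonempty
      · exact h1 j (Finset.mem_filter.mpr ⟨hj, hne⟩)
      · exact h2 j (Finset.mem_filter.mpr ⟨hj, hne⟩)
  -- φE only depends on coordinates outside A i
  have hφEout : ∀ B, φE B ↔ φE (B \ A i) := by
    intro B
    refine forall_congr' fun j => forall_congr' fun hj => not_congr ?_
    have hdisj : ∀ v ∈ A j, v ∉ A i := by
      intro v hv hvi
      exact (Finset.mem_filter.mp hj).2 ⟨v, Finset.mem_inter.mpr ⟨hvi, hv⟩⟩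
    constructor
    · intro h v hv
      exact Finset.mem_sdiff.mpr ⟨h hv, hdisj v hv⟩
    · intro h v hv
      exact (Finset.mem_sdiff.mp (h hv)).1
  -- split: P (insert i s) = Ps - T
  have hsplit : ∑ B ∈ univ.filter (fun B => ∀ j ∈ insert i s, ¬ A j ⊆ B), JW p B
      = Ps - T := by
    have h0 := Finset.sum_filter_add_sum_filter_not (univ.filter φS)
      (fun B => A i ⊆ B) (JW p)
    rw [Finset.filter_filter, Finset.filter_filter] at h0
    have e1 : ∑ B ∈ univ.filter (fun B => φS B ∧ A i ⊆ B), JW p B = T :=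
      sum_filter_iff _ _ (fun B => by tauto)
    have e2 : ∑ B ∈ univ.filter (fun B => φS B ∧ ¬ A i ⊆ B), JW p B
        = ∑ B ∈ univ.filter (fun B => ∀ j ∈ insert i s, ¬ A j ⊆ B), JW p B :=
      sum_filter_iff _ _ (fun B => by rw [Finset.forall_mem_insert]; tauto)
    rw [e1, e2] at h0
    linarith
  -- T' = q * PE by independence
  have hT' : ∑ B ∈ univ.filter (fun B => A i ⊆ B ∧ φE B), JW p B = q * PE :=
    JW_indep (A i) φE hφEout
  -- U j bound by Harris
  have hU : ∀ j ∈ s1, ∑ B ∈ univ.filter (fun B => A i ⊆ B ∧ A j ⊆ B ∧ φE B), JW p B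
      ≤ (∏ v ∈ A i ∪ A j, p v) * PE := by
    intro j hj
    have h1 : ∑ B ∈ univ.filter (fun B => A i ⊆ B ∧ A j ⊆ B ∧ φE B), JW p B
        = ∑ B ∈ univ.filter (fun B => (A i ∪ A j ⊆ B) ∧ φE B), JW p B :=
      sum_filter_iff _ _ (fun B => by rw [Finset.union_subset_iff]; tauto)
    rw [h1]
    have h2 := harris_up_down hp0 hp1 (fun B => A i ∪ A j ⊆ B) φE
      (fun B B' hBB h => h.trans hBB)
      (fun B B' hBB h k hk hAB => h k hk (hAB.trans hBB))
    rw [JW_upset] at h2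
    exact h2
  -- union bound: T' ≤ T + ∑ U j
  have hunion : ∑ B ∈ univ.filter (fun B => A i ⊆ B ∧ φE B), JW p B
      ≤ T + ∑ j ∈ s1, ∑ B ∈ univ.filter (fun B => A i ⊆ B ∧ A j ⊆ B ∧ φE B), JW p B := by
    rw [hT, sum_filter_JW, sum_filter_JW]
    have e3 : ∀ j, ∑ B ∈ univ.filter (fun B => A i ⊆ B ∧ A j ⊆ B ∧ φE B), JW p B
        = ∑ B : Finset Ω, JW p B * Jind (fun B => A i ⊆ B ∧ A j ⊆ B ∧ φE B) B :=
      fun j => sum_filter_JW _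
    calc ∑ B : Finset Ω, JW p B * Jind (fun B => A i ⊆ B ∧ φE B) B
        ≤ ∑ B : Finset Ω, JW p B * (Jind (fun B => A i ⊆ B ∧ φS B) B
            + ∑ j ∈ s1, Jind (fun B => A i ⊆ B ∧ A j ⊆ B ∧ φE B) B) := by
          refine Finset.sum_le_sum fun B _ => ?_
          refine mul_le_mul_of_nonneg_left ?_ (JW_nonneg hp0 hp1 B)
          by_cases h : A i ⊆ B ∧ φE B
          · by_cases hD : ∀ j ∈ s1, ¬ A j ⊆ B
            · have : Jind (fun B => A i ⊆ B ∧ φS B) B = 1 := by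
                unfold Jind
                rw [if_pos ⟨h.1, (hφSiff B).mpr ⟨hD, h.2⟩⟩]
              rw [this]
              have : (0:ℝ) ≤ ∑ j ∈ s1, Jind (fun B => A i ⊆ B ∧ A j ⊆ B ∧ φE B) B :=
                Finset.sum_nonneg fun j _ => Jind_nonneg _ B
              have hle := Jind_le_one (fun B => A i ⊆ B ∧ φE B) B
              linarith
            · push_neg at hD
              obtain ⟨j, hj, hAj⟩ := hD
              have h1 : Jind (fun B => A i ⊆ B ∧ A j ⊆ B ∧ φE B) B = 1 := by
                unfold Jind
                rw [if_pos ⟨h.1, hAj, h.2⟩]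
              have h2 : (1:ℝ) ≤ ∑ k ∈ s1, Jind (fun B => A i ⊆ B ∧ A k ⊆ B ∧ φE B) B := by
                rw [← h1]
                exact Finset.single_le_sum
                  (f := fun k => Jind (fun B => A i ⊆ B ∧ A k ⊆ B ∧ φE B) B)
                  (fun k _ => Jind_nonneg _ B) hj
              have hle := Jind_le_one (fun B => A i ⊆ B ∧ φE B) B
              have h3 := Jind_nonneg (fun B => A i ⊆ B ∧ φS B) B
              linarith
          · have : Jind (fun B => A i ⊆ B ∧ φE B) B = 0 := by
              unfold Jind; rw [if_neg h]
            rw [this]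
            have h1 := Jind_nonneg (fun B => A i ⊆ B ∧ φS B) B
            have h2 : (0:ℝ) ≤ ∑ j ∈ s1, Jind (fun B => A i ⊆ B ∧ A j ⊆ B ∧ φE B) B :=
              Finset.sum_nonneg fun j _ => Jind_nonneg _ B
            linarith
      _ = ∑ B : Finset Ω, JW p B * Jind (fun B => A i ⊆ B ∧ φS B) B
            + ∑ j ∈ s1, ∑ B : Finset Ω, JW p B * Jind (fun B => A i ⊆ B ∧ A j ⊆ B ∧ φE B) B := by
          simp_rw [mul_add, Finset.mul_sum]
          rw [Finset.sum_add_distrib, Finset.sum_comm]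
      _ = _ := by
          rw [← sum_filter_JW]
          refine congrArg _ (Finset.sum_congr rfl fun j _ => ?_)
          rw [e3 j]
  -- combine everything
  have hTlow : (q - Sd) * PE ≤ T := by
    have h2 : ∑ j ∈ s1, ∑ B ∈ univ.filter (fun B => A i ⊆ B ∧ A j ⊆ B ∧ φE B), JW p B
        ≤ ∑ j ∈ s1, (∏ v ∈ A i ∪ A j, p v) * PE := Finset.sum_le_sum hU
    rw [← Finset.sum_mul, ← hSd] at h2
    rw [sub_mul]
    rw [hT'] at hunion
    linarith
  have hPsle : Ps ≤ PE := by
    rw [hPs, hPE]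
    apply Finset.sum_le_sum_of_subset_of_nonneg
    · intro B hB
      simp only [Finset.mem_filter, Finset.mem_univ, true_and] at hB ⊢
      exact fun j hj => hB j (Finset.mem_of_mem_filter j hj)
    · intro B _ _
      exact JW_nonneg hp0 hp1 B
  have hPs0 : 0 ≤ Ps := Finset.sum_nonneg fun B _ => JW_nonneg hp0 hp1 B
  have hT0 : 0 ≤ T := Finset.sum_nonneg fun B _ => JW_nonneg hp0 hp1 B
  rw [hsplit, hdsum]
  by_cases hcase : 0 ≤ q - Sd
  · have hmono : (q - Sd) * Ps ≤ (q - Sd) * PE := mul_le_mul_of_nonneg_left hPsle hcase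
    nlinarith [hTlow]
  · push_neg at hcase
    nlinarith [mul_nonneg (by linarith : (0:ℝ) ≤ Sd - q) hPs0, hT0]

lemma janson_main (p : Ω → ℝ) (hp0 : ∀ v, 0 ≤ p v) (hp1 : ∀ v, p v ≤ 1)
    (A : ι → Finset Ω) (ε : ℝ) (hε1 : ε < 1)
    (s : Finset ι) (hs : ∀ i ∈ s, ∏ v ∈ A i, p v ≤ ε) :
    (∏ i ∈ s, (1 - ∏ v ∈ A i, p v))
      ≤ (∑ B ∈ univ.filter (fun B => ∀ i ∈ s, ¬ A i ⊆ B), JW p B)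
    ∧ (∑ B ∈ univ.filter (fun B => ∀ i ∈ s, ¬ A i ⊆ B), JW p B)
      ≤ (∏ i ∈ s, (1 - ∏ v ∈ A i, p v)) *
          Real.exp ((∑ i ∈ s, ∑ j ∈ s,
            if i ≠ j ∧ (A i ∩ A j).Nonempty then ∏ v ∈ A i ∪ A j, p v else 0) /
            (2 * (1 - ε))) := by
  classical
  have hd_symm : ∀ i j : ι,
      (if i ≠ j ∧ (A i ∩ A j).Nonempty then ∏ v ∈ A i ∪ A j, p v else 0)
        = (if j ≠ i ∧ (A j ∩ A i).Nonempty then ∏ v ∈ A j ∪ A i, p v else 0) := by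
    intro i j
    have hcond : (i ≠ j ∧ (A i ∩ A j).Nonempty) ↔ (j ≠ i ∧ (A j ∩ A i).Nonempty) := by
      rw [Finset.inter_comm]
      exact and_congr ne_comm Iff.rfl
    rw [if_congr hcond rfl rfl, Finset.union_comm]
  induction s using Finset.cons_induction with
  | empty =>
      constructor
      · have h1 : (univ : Finset (Finset Ω)).filter
            (fun B => ∀ i ∈ (∅ : Finset ι), ¬ A i ⊆ B) = univ := by
          apply Finset.filter_true_of_mem
          intro B _ i hi
          exact absurd hi (Finset.notMem_empty i)
        rw [h1]
        simp [JW_sum_one]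
      · have h1 : (univ : Finset (Finset Ω)).filter
            (fun B => ∀ i ∈ (∅ : Finset ι), ¬ A i ⊆ B) = univ := by
          apply Finset.filter_true_of_mem
          intro B _ i hi
          exact absurd hi (Finset.notMem_empty i)
        rw [h1]
        simp [JW_sum_one]
  | cons a s ha ih =>
      have hs' : ∀ i ∈ s, ∏ v ∈ A i, p v ≤ ε := fun i hi => hs i (Finset.mem_cons_of_mem hi)
      obtain ⟨ihl, ihu⟩ := ih hs'
      set q : ℝ := ∏ v ∈ A a, p v with hqdef
      have hqε : q ≤ ε := hs a (Finset.mem_cons_self a s)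
      have hq0 : 0 ≤ q := Finset.prod_nonneg fun v _ => hp0 v
      have h1ε : (0:ℝ) < 1 - ε := by linarith
      have h1q : (0:ℝ) < 1 - q := by linarith
      set Sg : ℝ := ∑ j ∈ s, (if a ≠ j ∧ (A a ∩ A j).Nonempty
        then ∏ v ∈ A a ∪ A j, p v else 0) with hSg
      have hSg0 : 0 ≤ Sg := Finset.sum_nonneg fun j _ => by
        split_ifs
        · exact Finset.prod_nonneg fun v _ => hp0 v
        · exact le_refl 0
      have hprod0 : (0:ℝ) ≤ ∏ i ∈ s, (1 - ∏ v ∈ A i, p v) :=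
        Finset.prod_nonneg fun i hi => by linarith [hs' i hi]
      have hPs0 : (0:ℝ) ≤ ∑ B ∈ univ.filter (fun B => ∀ i ∈ s, ¬ A i ⊆ B), JW p B :=
        Finset.sum_nonneg fun B _ => JW_nonneg hp0 hp1 B
      have hconsins : Finset.cons a s ha = insert a s := Finset.cons_eq_insert a s ha
      -- double-sum expansion
      have hD : ∑ i ∈ insert a s, ∑ j ∈ insert a s,
            (if i ≠ j ∧ (A i ∩ A j).Nonempty then ∏ v ∈ A i ∪ A j, p v else 0)
          = (∑ i ∈ s, ∑ j ∈ s,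
              (if i ≠ j ∧ (A i ∩ A j).Nonempty then ∏ v ∈ A i ∪ A j, p v else 0))
            + 2 * Sg := by
        rw [Finset.sum_insert ha, Finset.sum_insert ha]
        have hdaa : (if a ≠ a ∧ (A a ∩ A a).Nonempty then ∏ v ∈ A a ∪ A a, p v else 0) = 0 := by
          simp
        have hinner : ∀ i ∈ s, ∑ j ∈ insert a s,
              (if i ≠ j ∧ (A i ∩ A j).Nonempty then ∏ v ∈ A i ∪ A j, p v else 0)
            = (if i ≠ a ∧ (A i ∩ A a).Nonempty then ∏ v ∈ A i ∪ A a, p v else 0)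
              + ∑ j ∈ s, (if i ≠ j ∧ (A i ∩ A j).Nonempty then ∏ v ∈ A i ∪ A j, p v else 0) :=
          fun i _ => Finset.sum_insert ha
        rw [Finset.sum_congr rfl hinner, Finset.sum_add_distrib, hdaa]
        have hsymsum : ∑ i ∈ s, (if i ≠ a ∧ (A i ∩ A a).Nonempty then ∏ v ∈ A i ∪ A a, p v else 0)
            = Sg := Finset.sum_congr rfl fun i _ => hd_symm i a
        rw [hsymsum, ← hSg]
        ring
      constructor
      · -- lower bound
        rw [hconsins, Finset.prod_insert ha]
        calc (1 - q) * ∏ i ∈ s, (1 - ∏ v ∈ A i, p v)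
            ≤ (1 - q) * ∑ B ∈ univ.filter (fun B => ∀ i ∈ s, ¬ A i ⊆ B), JW p B :=
              mul_le_mul_of_nonneg_left ihl h1q.le
          _ ≤ _ := janson_step_lower p hp0 hp1 A a s
      · -- upper bound
        rw [hconsins, Finset.prod_insert ha, hD]
        have hkey : 1 - q + Sg ≤ (1 - q) * Real.exp (Sg / (1 - ε)) := by
          have h2 : Sg / (1 - ε) + 1 ≤ Real.exp (Sg / (1 - ε)) := Real.add_one_le_exp _
          have h3 : (1 - q) * (Sg / (1 - ε) + 1) ≤ (1 - q) * Real.exp (Sg / (1 - ε)) :=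
            mul_le_mul_of_nonneg_left h2 h1q.le
          have h4 : 1 - q + Sg ≤ (1 - q) * (Sg / (1 - ε) + 1) := by
            rw [mul_add, mul_one]
            have h5 : Sg ≤ (1 - q) * (Sg / (1 - ε)) := by
              rw [mul_div_assoc', le_div_iff₀ h1ε]
              nlinarith
            linarith
          linarith
        have hexp : Sg / (1 - ε)
            + (∑ i ∈ s, ∑ j ∈ s,
                (if i ≠ j ∧ (A i ∩ A j).Nonempty then ∏ v ∈ A i ∪ A j, p v else 0))
              / (2 * (1 - ε))
            = ((∑ i ∈ s, ∑ j ∈ s,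
                (if i ≠ j ∧ (A i ∩ A j).Nonempty then ∏ v ∈ A i ∪ A j, p v else 0))
              + 2 * Sg) / (2 * (1 - ε)) := by
          field_simp
          ring
        calc ∑ B ∈ univ.filter (fun B => ∀ i ∈ insert a s, ¬ A i ⊆ B), JW p B
            ≤ (1 - q + Sg) * ∑ B ∈ univ.filter (fun B => ∀ i ∈ s, ¬ A i ⊆ B), JW p B := by
              have := janson_step_upper p hp0 hp1 A a s ha
              rw [← hSg] at this
              exact this
          _ ≤ (1 - q + Sg) * ((∏ i ∈ s, (1 - ∏ v ∈ A i, p v)) *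
                Real.exp ((∑ i ∈ s, ∑ j ∈ s,
                  (if i ≠ j ∧ (A i ∩ A j).Nonempty then ∏ v ∈ A i ∪ A j, p v else 0))
                  / (2 * (1 - ε)))) :=
              mul_le_mul_of_nonneg_left ihu (by linarith)
          _ ≤ ((1 - q) * Real.exp (Sg / (1 - ε))) * ((∏ i ∈ s, (1 - ∏ v ∈ A i, p v)) *
                Real.exp ((∑ i ∈ s, ∑ j ∈ s,
                  (if i ≠ j ∧ (A i ∩ A j).Nonempty then ∏ v ∈ A i ∪ A j, p v else 0))
                  / (2 * (1 - ε)))) := by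
              refine mul_le_mul_of_nonneg_right hkey ?_
              positivity
          _ = (1 - q) * (∏ i ∈ s, (1 - ∏ v ∈ A i, p v)) *
                Real.exp (((∑ i ∈ s, ∑ j ∈ s,
                  (if i ≠ j ∧ (A i ∩ A j).Nonempty then ∏ v ∈ A i ∪ A j, p v else 0))
                  + 2 * Sg) / (2 * (1 - ε))) := by
              rw [← hexp, Real.exp_add]
              ring

end JansonMain


open scoped Classical in
/-- Janson's inequality.  Each element `v` of the finite ground set `Ω` is included in a
random subset `R` independently with probability `p v`; `A i ⊆ Ω` are fixed subsets and
`𝒜ᵢ` is the event `A i ⊆ R`, so `P(𝒜ᵢ) = ∏_{v ∈ A i} p v ≤ ε < 1`.  With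
`Δ* = Σ_{i ∼ j} P(𝒜ᵢ ∧ 𝒜ⱼ)` over ordered pairs of dependent events and
`M = Π_i P(¬𝒜ᵢ)`, we have `M ≤ P(∧ᵢ ¬𝒜ᵢ) ≤ M·exp(Δ*/(2(1−ε)))`. -/
theorem janson_inequality {Ω ι : Type*} [Fintype Ω] [DecidableEq Ω]
    (p : Ω → ℝ) (hp0 : ∀ v, 0 ≤ p v) (hp1 : ∀ v, p v ≤ 1)
    (I : Finset ι) (A : ι → Finset Ω)
    (ε : ℝ) (hε1 : ε < 1)
    (hPr : ∀ i ∈ I, ∏ v ∈ A i, p v ≤ ε) :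
    (∏ i ∈ I, (1 - ∏ v ∈ A i, p v)) ≤
        ∑ B ∈ (Finset.univ : Finset (Finset Ω)).filter
            (fun B => ∀ i ∈ I, ¬ A i ⊆ B),
          (∏ v ∈ B, p v) * ∏ v ∈ Bᶜ, (1 - p v) ∧
      (∑ B ∈ (Finset.univ : Finset (Finset Ω)).filter
            (fun B => ∀ i ∈ I, ¬ A i ⊆ B),
          (∏ v ∈ B, p v) * ∏ v ∈ Bᶜ, (1 - p v)) ≤
        (∏ i ∈ I, (1 - ∏ v ∈ A i, p v)) *
          Real.exp ((∑ i ∈ I, ∑ j ∈ I,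
              if i ≠ j ∧ (A i ∩ A j).Nonempty then ∏ v ∈ A i ∪ A j, p v else 0) /
            (2 * (1 - ε))) := by
  have h := janson_main p hp0 hp1 A ε hε1 I hPr
  exact h
end

section
/- Let N be a finite set and choose a random subset by including each element i independently with probability p_i. If 𝒜 is a monotone increasing family of subsets of N and 𝒞 is a monotone decreasing family of subsets of N, then P(𝒜 ∩ 𝒞) ≤ P(𝒜)·P(𝒞). -/
open Finset

/-- Harris/FKG negative-correlation inequality: under the product Bernoulli measure on
subsets of a finite set `N` (element `i` included independently with probability `p i`),
if `𝒜` is a monotone increasing family and `𝒞` a monotone decreasing family, then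
`P(𝒜 ∩ 𝒞) ≤ P(𝒜)·P(𝒞)`. -/
theorem increasing_decreasing_neg_corr {N : Type*} [Fintype N] [DecidableEq N]
    (p : N → ℝ) (hp0 : ∀ i, 0 ≤ p i) (hp1 : ∀ i, p i ≤ 1)
    (𝒜 𝒞 : Finset (Finset N))
    (hinc : ∀ A ∈ 𝒜, ∀ A' : Finset N, A ⊆ A' → A' ∈ 𝒜)
    (hdec : ∀ C ∈ 𝒞, ∀ C' : Finset N, C' ⊆ C → C' ∈ 𝒞) :
    (∑ B ∈ 𝒜 ∩ 𝒞, (∏ i ∈ B, p i) * ∏ j ∈ Bᶜ, (1 - p j)) ≤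
      (∑ B ∈ 𝒜, (∏ i ∈ B, p i) * ∏ j ∈ Bᶜ, (1 - p j)) *
        (∑ B ∈ 𝒞, (∏ i ∈ B, p i) * ∏ j ∈ Bᶜ, (1 - p j)) := by
  classical
  set μ : Finset N → ℝ := fun B => (∏ i ∈ B, p i) * ∏ j ∈ Bᶜ, (1 - p j) with hμdef
  have hμ0 : 0 ≤ μ := fun B =>
    mul_nonneg (prod_nonneg fun i _ => hp0 i) (prod_nonneg fun j _ => by linarith [hp1 j])
  set f : Finset N → ℝ := fun B => if B ∈ 𝒜 then 1 else 0 with hfdef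
  set g : Finset N → ℝ := fun B => if B ∈ 𝒞 then 0 else 1 with hgdef
  have hf0 : 0 ≤ f := fun B => by dsimp [f]; split <;> norm_num
  have hg0 : 0 ≤ g := fun B => by dsimp [g]; split <;> norm_num
  have hfmono : Monotone f := by
    intro B B' hBB'
    dsimp [f]
    by_cases hB : B ∈ 𝒜
    · simp [hB, hinc B hB B' hBB']
    · simp [hB]; split <;> norm_num
  have hgmono : Monotone g := by
    intro B B' hBB'
    dsimp [g]
    by_cases hB' : B' ∈ 𝒞
    · simp [hB', hdec B' hB' B hBB']
    · simp [hB']; split <;> norm_num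
  have hμmod : ∀ a b : Finset N, μ a * μ b ≤ μ (a ⊓ b) * μ (a ⊔ b) := by
    intro a b
    have h1 : (∏ i ∈ a, p i) * ∏ i ∈ b, p i
        = (∏ i ∈ a ∩ b, p i) * ∏ i ∈ a ∪ b, p i := by
      rw [mul_comm (∏ i ∈ a ∩ b, p i)]
      exact (Finset.prod_union_inter (s₁ := a) (s₂ := b)).symm
    have h2 : (∏ j ∈ aᶜ, (1 - p j)) * ∏ j ∈ bᶜ, (1 - p j)
        = (∏ j ∈ (a ∩ b)ᶜ, (1 - p j)) * ∏ j ∈ (a ∪ b)ᶜ, (1 - p j) := by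
      rw [Finset.compl_inter, Finset.compl_union, mul_comm (∏ j ∈ aᶜ ∪ bᶜ, (1 - p j))]
      exact (Finset.prod_union_inter (f := fun j => 1 - p j) (s₁ := aᶜ) (s₂ := bᶜ)).symm.trans (mul_comm _ _)
    have : μ a * μ b = μ (a ⊓ b) * μ (a ⊔ b) := by
      simp only [hμdef, inf_eq_inter, sup_eq_union]
      rw [mul_mul_mul_comm, h1, h2, mul_mul_mul_comm]
    exact this.le
  have key := fkg f g μ hμ0 hf0 hg0 hfmono hgmono hμmod
  have hμsum : (∑ B : Finset N, μ B) = 1 := by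
    have h := Finset.prod_add p (fun j => 1 - p j) (univ : Finset N)
    have h2 : ∀ i, p i + (1 - p i) = 1 := fun i => by ring
    simp only [h2, prod_const_one, powerset_univ] at h
    calc (∑ B : Finset N, μ B)
        = ∑ B : Finset N, (∏ i ∈ B, p i) * ∏ j ∈ univ \ B, (1 - p j) := by
          refine Finset.sum_congr rfl fun B _ => ?_
          simp only [hμdef]
          rw [compl_eq_univ_sdiff]
      _ = 1 := h.symm
  have hA : (∑ B : Finset N, μ B * f B) = ∑ B ∈ 𝒜, μ B := by
    rw [Finset.sum_congr rfl (fun B (_ : B ∈ univ) => by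
      show μ B * f B = if B ∈ 𝒜 then μ B else 0
      dsimp [f]; split <;> simp)]
    simp [Finset.sum_ite_mem]
  have hC : (∑ B : Finset N, μ B * g B) = (∑ B : Finset N, μ B) - ∑ B ∈ 𝒞, μ B := by
    rw [Finset.sum_congr rfl (fun B (_ : B ∈ univ) => by
      show μ B * g B = μ B - if B ∈ 𝒞 then μ B else 0
      dsimp [g]; split <;> ring)]
    rw [Finset.sum_sub_distrib]
    simp [Finset.sum_ite_mem]
  have hAC : (∑ B : Finset N, μ B * (f B * g B))
      = (∑ B ∈ 𝒜, μ B) - ∑ B ∈ 𝒜 ∩ 𝒞, μ B := by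
    rw [Finset.sum_congr rfl (fun B (_ : B ∈ univ) => by
      show μ B * (f B * g B) = (if B ∈ 𝒜 then μ B else 0) - if B ∈ 𝒜 ∩ 𝒞 then μ B else 0
      dsimp [f, g]
      by_cases hB : B ∈ 𝒜 <;> by_cases hB' : B ∈ 𝒞 <;> simp [hB, hB', Finset.mem_inter])]
    rw [Finset.sum_sub_distrib]
    congr 1
    · simp [Finset.sum_ite_mem]
    · rw [← Finset.sum_filter]
      congr 1
      ext B
      simp [Finset.mem_inter]
  rw [hA, hC, hAC, hμsum] at key
  have hx : (∑ B ∈ 𝒜 ∩ 𝒞, (∏ i ∈ B, p i) * ∏ j ∈ Bᶜ, (1 - p j)) = ∑ B ∈ 𝒜 ∩ 𝒞, μ B := rfl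
  have ha : (∑ B ∈ 𝒜, (∏ i ∈ B, p i) * ∏ j ∈ Bᶜ, (1 - p j)) = ∑ B ∈ 𝒜, μ B := rfl
  have hc : (∑ B ∈ 𝒞, (∏ i ∈ B, p i) * ∏ j ∈ Bᶜ, (1 - p j)) = ∑ B ∈ 𝒞, μ B := rfl
  rw [hx, ha, hc]
  nlinarith [key]
end
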